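/- Let S be an additively divisible semiring (commutative, possibly without neutral elements) and let A be a nonempty subset of S such that there exists m ≥ 1 with ord(a) ≤ m for every a ∈ A, and such that S is generated by A as an S-semimodule: the smallest subset of S containing A, closed under addition, and closed under multiplication by arbitrary elements of S, equals S. Then S is additively idempotent. -/
import Mathlib

/-- `nmul n a` is the `n`-fold sum `a + ⋯ + a` (for `n ≥ 1`; `nmul 0 a = a` is junk). -/
def nmul {S : Type*} [Add S] (n : ℕ) (a : S) : S :=
  Nat.rec a (fun _ b => b + a) (n - 1)

/-- The set `{n·a : n ≥ 1}`; `ord a` is its cardinality. -/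
def addOrbit {S : Type*} [Add S] (a : S) : Set S :=
  {x | ∃ n : ℕ, 1 ≤ n ∧ nmul n a = x}

/-- The `S`-subsemimodule generated by `A`: the smallest subset of `S` containing `A`,
closed under addition and under multiplication by arbitrary elements of `S`. -/
def modClosure {S : Type*} [Add S] [Mul S] (A : Set S) : Set S :=
  ⋂₀ {T : Set S | A ⊆ T ∧ (∀ x ∈ T, ∀ y ∈ T, x + y ∈ T) ∧ (∀ s : S, ∀ x ∈ T, s * x ∈ T)}

section lemmas
variable {S : Type*} [AddCommSemigroup S]

lemma nmul_one (a : S) : nmul 1 a = a := rfl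

lemma nmul_succ (n : ℕ) (hn : 1 ≤ n) (a : S) :
    nmul (n + 1) a = nmul n a + a := by
  obtain ⟨k, rfl⟩ := Nat.exists_eq_add_of_le hn
  rw [Nat.add_comm 1 k]
  rfl

lemma nmul_add (n k : ℕ) (hn : 1 ≤ n) (hk : 1 ≤ k) (a : S) :
    nmul (n + k) a = nmul n a + nmul k a := by
  induction k with
  | zero => omega
  | succ k ih =>
    rcases Nat.eq_or_lt_of_le hk with h | h
    · rw [← h, nmul_succ n hn, nmul_one]
    · have hk1 : 1 ≤ k := by omega
      rw [← Nat.add_assoc, nmul_succ (n + k) (by omega), ih hk1,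
        nmul_succ k hk1, add_assoc]

lemma nmul_add_dist (n : ℕ) (x y : S) :
    nmul n (x + y) = nmul n x + nmul n y := by
  induction n with
  | zero => rfl
  | succ n ih =>
    rcases Nat.eq_zero_or_pos n with rfl | hn
    · rfl
    · rw [nmul_succ n hn, nmul_succ n hn, nmul_succ n hn, ih,
        add_add_add_comm]

lemma nmul_period {i p : ℕ} (hi : 1 ≤ i) (hp : 1 ≤ p) (a : S)
    (h : nmul (i + p) a = nmul i a) :
    ∀ n, i ≤ n → nmul (n + p) a = nmul n a := by
  intro n hn
  obtain ⟨t, rfl⟩ := Nat.exists_eq_add_of_le hn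
  rcases Nat.eq_zero_or_pos t with rfl | ht
  · simpa using h
  · have he : i + t + p = (i + p) + t := by omega
    rw [he, nmul_add _ _ (by omega) ht, h, ← nmul_add _ _ hi ht]

lemma nmul_period_mul {i p : ℕ} (hi : 1 ≤ i) (hp : 1 ≤ p) (a : S)
    (h : nmul (i + p) a = nmul i a) :
    ∀ k n, i ≤ n → nmul (n + k * p) a = nmul n a := by
  intro k
  induction k with
  | zero => intro n _; simp
  | succ k ih =>
    intro n hn
    have he : n + (k + 1) * p = (n + k * p) + p := by ring
    rw [he, nmul_period hi hp a h (n + k * p) (by omega), ih n hn]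

end lemmas

section mul
variable {S : Type*} [AddCommSemigroup S] [Mul S]

lemma nmul_mul (hdl : ∀ a b c : S, a * (b + c) = a * b + a * c)
    (n : ℕ) (s x : S) : nmul n (s * x) = s * nmul n x := by
  induction n with
  | zero => rfl
  | succ n ih =>
    rcases Nat.eq_zero_or_pos n with rfl | hn
    · rfl
    · rw [nmul_succ n hn, nmul_succ n hn, ih, hdl]

end mul

theorem stmt_8 {S : Type*} [AddCommSemigroup S] [CommSemigroup S]
    (hdl : ∀ a b c : S, a * (b + c) = a * b + a * c)
    (hdr : ∀ a b c : S, (a + b) * c = a * c + b * c)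
    (hdiv : ∀ a : S, ∀ n : ℕ, 1 ≤ n → ∃ b : S, nmul n b = a)
    (A : Set S) (hA : A.Nonempty) (m : ℕ) (hm : 1 ≤ m)
    (hbound : ∀ a ∈ A, (addOrbit a).Finite ∧ (addOrbit a).ncard ≤ m)
    (hgen : modClosure A = Set.univ) :
    ∀ a : S, a + a = a := by
  set F := Nat.factorial m with hF
  have hF1 : 1 ≤ F := Nat.factorial_pos m
  set T : Set S := {x | ∀ n, m ≤ n → nmul (n + F) x = nmul n x} with hT
  -- A ⊆ T
  have hAT : A ⊆ T := by
    intro a ha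
    obtain ⟨hfin, hcard⟩ := hbound a ha
    -- pigeonhole on {1, ..., m+1}
    have hmaps : ∀ n ∈ Finset.Icc 1 (m + 1), nmul n a ∈ hfin.toFinset := by
      intro n hn
      rw [Set.Finite.mem_toFinset]
      exact ⟨n, (Finset.mem_Icc.mp hn).1, rfl⟩
    have hlt : hfin.toFinset.card < (Finset.Icc 1 (m + 1)).card := by
      rw [Nat.card_Icc]
      rw [← Set.ncard_eq_toFinset_card _ hfin]
      omega
    obtain ⟨i, hi, j, hj, hij, heq⟩ :=
      Finset.exists_ne_map_eq_of_card_lt_of_maps_to hlt hmaps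
    rw [Finset.mem_Icc] at hi hj
    -- wlog i < j
    obtain ⟨i, j, hi1, hjm, hlt', heq'⟩ :
        ∃ i j : ℕ, 1 ≤ i ∧ j ≤ m + 1 ∧ i < j ∧ nmul i a = nmul j a := by
      rcases lt_or_gt_of_ne hij with h | h
      · exact ⟨i, j, hi.1, hj.2, h, heq⟩
      · exact ⟨j, i, hj.1, hi.2, h, heq.symm⟩
    set p := j - i with hp
    have hp1 : 1 ≤ p := by omega
    have hpm : p ≤ m := by omega
    have him : i ≤ m := by omega
    have hper : nmul (i + p) a = nmul i a := by
      have : i + p = j := by omega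
      rw [this, heq']
    obtain ⟨q, hq⟩ : p ∣ F := Nat.dvd_factorial hp1 hpm
    intro n hn
    have : n + F = n + q * p := by rw [hq]; ring
    rw [this]
    exact nmul_period_mul hi1 hp1 a hper q n (by omega)
  -- T is closed
  have hTadd : ∀ x ∈ T, ∀ y ∈ T, x + y ∈ T := by
    intro x hx y hy n hn
    rw [nmul_add_dist, nmul_add_dist, hx n hn, hy n hn]
  have hTmul : ∀ s : S, ∀ x ∈ T, s * x ∈ T := by
    intro s x hx n hn
    rw [nmul_mul hdl, nmul_mul hdl, hx n hn]
  -- every element is in T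
  have hall : ∀ x : S, x ∈ T := by
    intro x
    have hsub : modClosure A ⊆ T := Set.sInter_subset_of_mem ⟨hAT, hTadd, hTmul⟩
    rw [hgen] at hsub
    exact hsub (Set.mem_univ x)
  -- conclude
  intro a
  set N := m * F with hN
  have hN1 : 1 ≤ N := by
    have := Nat.one_le_iff_ne_zero.mpr (by positivity : N ≠ 0)
    exact this
  obtain ⟨b, hb⟩ := hdiv a N hN1
  have hmN : m ≤ N := by
    calc m = m * 1 := (Nat.mul_one m).symm
    _ ≤ m * F := Nat.mul_le_mul_left m hF1
  have key : ∀ k : ℕ, nmul (N + k * F) b = nmul N b := by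
    intro k
    induction k with
    | zero => simp
    | succ k ih =>
      have he : N + (k + 1) * F = (N + k * F) + F := by ring
      rw [he, hall b (N + k * F) (by omega), ih]
  calc a + a = nmul N b + nmul N b := by rw [hb]
    _ = nmul (N + N) b := (nmul_add N N hN1 hN1 b).symm
    _ = nmul (N + m * F) b := by rw [← hN]
    _ = nmul N b := key m
    _ = a := hb
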